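/- Every connected interval graph contains a dominating path, i.e., a path P such that every vertex of the graph is either on P or adjacent to a vertex of P. -/
import Mathlib

private lemma walk_interval_cover {V : Type*} {G : SimpleGraph V}
    {l r : V → ℝ} (hlr : ∀ v, l v ≤ r v)
    (hadj : ∀ v w, G.Adj v w → l w ≤ r v)
    {a b : V} (p : G.Walk a b) :
    ∀ t : ℝ, l a ≤ t → t ≤ r b → ∃ y ∈ p.support, l y ≤ t ∧ t ≤ r y := by
  induction p with
  | nil => exact fun t h1 h2 => ⟨_, by simp, h1, h2⟩
  | @cons a c b hac q ih =>
    intro t h1 h2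
    by_cases ht : t ≤ r a
    · exact ⟨a, by simp, h1, ht⟩
    · obtain ⟨y, hy, h⟩ := ih t (le_trans (hadj a c hac) (le_of_not_ge ht)) h2
      exact ⟨y, by simp [hy], h⟩

/-- Every connected interval graph contains a dominating path. -/
theorem interval_graph_dominating_path {V : Type*} [Fintype V] (G : SimpleGraph V)
    (l r : V → ℝ) (hlr : ∀ v, l v ≤ r v)
    (hadj : ∀ v w, G.Adj v w ↔ v ≠ w ∧ l w ≤ r v ∧ l v ≤ r w)
    (hconn : G.Connected) :
    ∃ (u v : V) (p : G.Walk u v), p.IsPath ∧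
      ∀ x : V, x ∈ p.support ∨ ∃ y ∈ p.support, G.Adj x y := by
  classical
  have hne : Nonempty V := hconn.nonempty
  obtain ⟨a, _, ha⟩ := Finset.exists_min_image Finset.univ l ⟨hne.some, Finset.mem_univ _⟩
  obtain ⟨b, _, hb⟩ := Finset.exists_max_image Finset.univ r ⟨hne.some, Finset.mem_univ _⟩
  obtain ⟨w⟩ := hconn a b
  refine ⟨a, b, w.toPath, w.toPath.2, fun x => ?_⟩
  have hadj' : ∀ v w, G.Adj v w → l w ≤ r v := fun v w h => ((hadj v w).1 h).2.1
  obtain ⟨y, hy, h1, h2⟩ := walk_interval_cover hlr hadj' (w.toPath : G.Walk a b) (l x)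
    (ha x (Finset.mem_univ x)) (le_trans (hlr x) (hb x (Finset.mem_univ x)))
  by_cases hxy : x = y
  · exact Or.inl (hxy ▸ hy)
  · exact Or.inr ⟨y, hy, (hadj x y).2 ⟨hxy, le_trans h1 (hlr x), h2⟩⟩
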